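/- Let H_β(s) = (s² + 0.9s + 0.45 + β(0.29s + 0.84)) / (s³ + 1.35s² + 1.35s + 1). For β = 0.3, Re H_β(iω) > 0 for all real ω, i.e. |arg H_β(iω)| < π/2 for all ω at which H_β(iω) ≠ 0. -/

import Mathlib

open Real

/-- For `H_β(s) = (s² + 0.9s + 0.45 + β(0.29s + 0.84))/(s³ + 1.35s² + 1.35s + 1)` with
`β = 0.3`, one has `Re H_β(iω) > 0` for all real `ω`, hence `|arg H_β(iω)| < π/2`
wherever `H_β(iω) ≠ 0`. -/
theorem example2_hbeta_spr
    (H : ℂ → ℂ)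
    (hH : ∀ s : ℂ, H s =
      (s ^ 2 + 0.9 * s + 0.45 + (0.3 : ℂ) * (0.29 * s + 0.84)) /
        (s ^ 3 + 1.35 * s ^ 2 + 1.35 * s + 1)) :
    ∀ ω : ℝ, 0 < (H (Complex.I * (ω : ℂ))).re ∧
      (H (Complex.I * (ω : ℂ)) ≠ 0 → |Complex.arg (H (Complex.I * (ω : ℂ)))| < π / 2) := by
  intro ω
  have hI : (Complex.I : ℂ) ^ 2 = -1 := Complex.I_sq
  have hnum : ((Complex.I * (ω : ℂ)) ^ 2 + 0.9 * (Complex.I * (ω : ℂ)) + 0.45 +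
      (0.3 : ℂ) * (0.29 * (Complex.I * (ω : ℂ)) + 0.84)) =
      (((351/500 - ω ^ 2 : ℝ) : ℂ) + ((987/1000 * ω : ℝ) : ℂ) * Complex.I) := by
    push_cast
    norm_num
    linear_combination ((ω : ℂ) ^ 2) * hI
  have hden : ((Complex.I * (ω : ℂ)) ^ 3 + 1.35 * (Complex.I * (ω : ℂ)) ^ 2 +
      1.35 * (Complex.I * (ω : ℂ)) + 1) =
      (((1 - 27/20 * ω ^ 2 : ℝ) : ℂ) + ((27/20 * ω - ω ^ 3 : ℝ) : ℂ) * Complex.I) := by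
    push_cast
    norm_num
    linear_combination ((27/20 : ℂ) * (ω : ℂ) ^ 2) * hI + ((ω : ℂ) ^ 3 * Complex.I) * hI
  have key : 0 < (H (Complex.I * (ω : ℂ))).re := by
    rw [hH, hnum, hden, Complex.div_re]
    simp only [Complex.add_re, Complex.add_im, Complex.ofReal_re, Complex.ofReal_im,
      Complex.mul_re, Complex.mul_im, Complex.I_re, Complex.I_im, Complex.normSq_apply]
    rw [← add_div]
    apply div_pos
    · nlinarith [sq_nonneg (ω ^ 2 - 847/1000), sq_nonneg ω]
    · nlinarith [sq_nonneg (ω ^ 2 - 751/800), sq_nonneg ω,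
        mul_nonneg (sq_nonneg ω) (sq_nonneg (ω ^ 2 - 751/800))]
  refine ⟨key, fun h => ?_⟩
  rw [Complex.abs_arg_lt_pi_div_two_iff]
  exact Or.inl key
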